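/- Let 0 < ε < 1, let α ≤ 0 be real, and let d ≥ 4. Consider a cycle C₂ₙ on 2n vertices whose weights alternate between c := 2/(d−1−ε) ∈ (0,1) and 1. Let A be the set of the n vertices of weight c and A* the set of the n vertices of weight 1. Then A is an independent set maximizing ∑_{v∈S} w(v)^α over all independent sets S (so no local improvement of w^α(A) exists), while w(A*)/w(A) = (d−1−ε)/2. -/

import Mathlib

theorem alternating_cycle_lower_bound (n d : ℕ) (hn : 0 < n) (hd : 4 ≤ d)
    (α ε : ℝ) (hα : α ≤ 0) (hε0 : 0 < ε) (hε1 : ε < 1) :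
    let G : SimpleGraph (Fin (2 * n)) :=
      SimpleGraph.fromRel (fun a b => (a.val + 1) % (2 * n) = b.val)
    let c : ℝ := 2 / ((d : ℝ) - 1 - ε)
    let w : Fin (2 * n) → ℝ := fun v => if Even v.val then c else 1
    let A : Finset (Fin (2 * n)) := Finset.univ.filter (fun v => Even v.val)
    let Astar : Finset (Fin (2 * n)) := Finset.univ.filter (fun v => ¬ Even v.val)
    (∀ x ∈ A, ∀ y ∈ A, ¬ G.Adj x y) ∧
    (∀ S : Finset (Fin (2 * n)), (∀ x ∈ S, ∀ y ∈ S, ¬ G.Adj x y) →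
      ∑ v ∈ S, (w v) ^ α ≤ ∑ v ∈ A, (w v) ^ α) ∧
    (∑ v ∈ Astar, w v) / (∑ v ∈ A, w v) = ((d : ℝ) - 1 - ε) / 2 := by
  intro G c w A Astar
  have hn2 : 0 < 2 * n := by omega
  have hd4 : (4:ℝ) ≤ (d:ℝ) := by exact_mod_cast hd
  have hden : (2:ℝ) < (d:ℝ) - 1 - ε := by linarith
  have hc0 : 0 < c := by
    have : (0:ℝ) < (d:ℝ) - 1 - ε := by linarith
    exact div_pos two_pos this
  have hc1 : c < 1 := by
    rw [div_lt_one (by linarith)]; linarith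
  have hca : (1:ℝ) ≤ c ^ α :=
    Real.one_le_rpow_of_pos_of_le_one_of_nonpos hc0 hc1.le hα
  have hca0 : (0:ℝ) ≤ c ^ α := by linarith
  -- parity of mod
  have hmod : ∀ m : ℕ, (m % (2 * n)) % 2 = m % 2 := fun m =>
    Nat.mod_mod_of_dvd m ⟨n, rfl⟩
  -- no edge between two even vertices
  have hindep : ∀ x y : Fin (2*n), Even x.val → Even y.val → ¬ G.Adj x y := by
    intro x y hx hy hadj
    rw [SimpleGraph.fromRel_adj] at hadj
    obtain ⟨hne, h | h⟩ := hadj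
    · have := hmod (x.val + 1)
      rw [h] at this
      rw [Nat.even_iff] at hx hy
      omega
    · have := hmod (y.val + 1)
      rw [h] at this
      rw [Nat.even_iff] at hx hy
      omega
  -- card of A is n
  have hAcard : A.card = n := by
    have h : A.card = (Finset.univ : Finset (Fin n)).card := by
      refine Finset.card_bij' (fun v _ => (⟨v.val / 2, by omega⟩ : Fin n))
        (fun k _ => (⟨2 * k.val, by omega⟩ : Fin (2*n))) (fun v _ => Finset.mem_univ _)
        ?_ ?_ ?_
      · intro k _
        simp only [A, Finset.mem_filter]
        exact ⟨Finset.mem_univ _, ⟨k.val, by ring⟩⟩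
      · intro v hv
        simp only [A, Finset.mem_filter] at hv
        obtain ⟨k, hk⟩ := hv.2
        apply Fin.ext
        simp
        omega
      · intro k _
        apply Fin.ext
        simp
    rw [h, Finset.card_univ, Fintype.card_fin]
  have hAstarcard : Astar.card = n := by
    have h : Astar.card = (Finset.univ : Finset (Fin n)).card := by
      refine Finset.card_bij' (fun v _ => (⟨v.val / 2, by omega⟩ : Fin n))
        (fun k _ => (⟨2 * k.val + 1, by omega⟩ : Fin (2*n))) (fun v _ => Finset.mem_univ _)
        ?_ ?_ ?_
      · intro k _
        simp only [Astar, Finset.mem_filter]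
        refine ⟨Finset.mem_univ _, ?_⟩
        rw [Nat.not_even_iff]
        omega
      · intro v hv
        simp only [Astar, Finset.mem_filter] at hv
        rw [Nat.not_even_iff] at hv
        apply Fin.ext
        simp
        omega
      · intro k _
        apply Fin.ext
        simp
        omega
    rw [h, Finset.card_univ, Fintype.card_fin]
  have hAsum : ∑ v ∈ A, (w v) ^ α = n * c ^ α := by
    rw [Finset.sum_congr rfl (fun v hv => ?_), Finset.sum_const, hAcard,
      nsmul_eq_mul]
    simp only [A, Finset.mem_filter] at hv
    simp [w, hv.2]
  refine ⟨fun x hx y hy => hindep x y (by simpa [A] using hx) (by simpa [A] using hy),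
    ?_, ?_⟩
  · -- maximality
    intro S hS
    rw [hAsum]
    have hfib := Finset.sum_fiberwise_of_maps_to (s := S)
      (g := fun v : Fin (2*n) => (⟨v.val / 2, by omega⟩ : Fin n))
      (fun v _ => Finset.mem_univ _) (fun v => (w v) ^ α)
    rw [← hfib]
    have hbound : ∀ k : Fin n,
        ∑ v ∈ S.filter (fun v => (⟨v.val / 2, by omega⟩ : Fin n) = k), (w v) ^ α ≤ c ^ α := by
      intro k
      have hcard : (S.filter (fun v => (⟨v.val / 2, by omega⟩ : Fin n) = k)).card ≤ 1 := by
        rw [Finset.card_le_one]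
        intro u hu v hv
        simp only [Finset.mem_filter] at hu hv
        by_contra hne
        have huv : u.val / 2 = v.val / 2 := by
          have h1 := hu.2; have h2 := hv.2
          rw [Fin.ext_iff] at h1 h2
          simp at h1 h2
          omega
        have hne' : u.val ≠ v.val := fun h => hne (Fin.ext h)
        -- wlog u < v, then v = u + 1 with u even, or symmetric
        rcases Nat.lt_or_ge u.val v.val with hlt | hge
        · have hv1 : v.val = u.val + 1 := by omega
          apply hS u hu.1 v hv.1
          rw [SimpleGraph.fromRel_adj]
          refine ⟨hne, Or.inl ?_⟩
          rw [Nat.mod_eq_of_lt (by omega), hv1]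
        · have hu1 : u.val = v.val + 1 := by omega
          apply hS v hv.1 u hu.1
          rw [SimpleGraph.fromRel_adj]
          refine ⟨fun h => hne h.symm, Or.inl ?_⟩
          rw [Nat.mod_eq_of_lt (by omega), hu1]
      have hterm : ∀ v ∈ S.filter (fun v => (⟨v.val / 2, by omega⟩ : Fin n) = k),
          (w v) ^ α ≤ c ^ α := by
        intro v _
        by_cases hev : Even v.val
        · simp [w, hev]
        · simp only [w, hev, if_false]
          rw [Real.one_rpow]
          exact hca
      calc ∑ v ∈ S.filter (fun v => (⟨v.val / 2, by omega⟩ : Fin n) = k), (w v) ^ α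
          ≤ (S.filter (fun v => (⟨v.val / 2, by omega⟩ : Fin n) = k)).card • (c ^ α) :=
            Finset.sum_le_card_nsmul _ _ _ hterm
        _ ≤ 1 • (c ^ α) := by
            exact nsmul_le_nsmul_left hca0 hcard
        _ = c ^ α := one_nsmul _
    calc ∑ k : Fin n, ∑ v ∈ S.filter (fun v => (⟨v.val / 2, by omega⟩ : Fin n) = k), (w v) ^ α
        ≤ ∑ _k : Fin n, c ^ α := Finset.sum_le_sum (fun k _ => hbound k)
      _ = n * c ^ α := by rw [Finset.sum_const, Finset.card_univ, Fintype.card_fin, nsmul_eq_mul]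
  · -- ratio
    have h1 : ∑ v ∈ Astar, w v = n := by
      rw [Finset.sum_congr rfl (fun v hv => ?_), Finset.sum_const, hAstarcard, nsmul_eq_mul,
        mul_one]
      simp only [Astar, Finset.mem_filter] at hv
      simp [w, hv.2]
    have h2 : ∑ v ∈ A, w v = n * c := by
      rw [Finset.sum_congr rfl (fun v hv => ?_), Finset.sum_const, hAcard, nsmul_eq_mul]
      simp only [A, Finset.mem_filter] at hv
      simp [w, hv.2]
    rw [h1, h2]
    have hn' : (0:ℝ) < n := by exact_mod_cast hn
    field_simp [c]
    have hc' : c * ((d:ℝ) - 1 - ε) = 2 := div_mul_cancel₀ 2 (ne_of_gt (by linarith))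
    linear_combination -hc'
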